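/- Let D = conv{0, e₁, e₂, e₁+e₂, e₃} ⊆ ℝ³ be the quadrangular pyramid over the unit square conv{0, e₁, e₂, e₁+e₂} with apex e₃, and let Λ' be a full-rank lattice in ℝ³ containing ℤ³ such that for any two distinct vectors s, t ∈ Λ' the interiors of D + s and D + t are disjoint. Then Λ' = ℤ³. -/

import Mathlib

open Pointwise MeasureTheory

/-- The standard basis vector `eᵢ` of `ℝ³`. -/
noncomputable def stdVec (i : Fin 3) : EuclideanSpace ℝ (Fin 3) :=
  EuclideanSpace.single i (1 : ℝ)

/-- The quadrangular pyramid `conv {0, e₁, e₂, e₁+e₂, e₃} ⊆ ℝ³` over the unit square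
`conv {0, e₁, e₂, e₁+e₂}` with apex `e₃`. -/
noncomputable def stdPyramid : Set (EuclideanSpace ℝ (Fin 3)) :=
  convexHull ℝ {0, stdVec 0, stdVec 1, stdVec 0 + stdVec 1, stdVec 2}

/-- The standard integer lattice `ℤ³ ⊆ ℝ³`, i.e. the `ℤ`-span of the standard basis. -/
noncomputable def intLattice : Submodule ℤ (EuclideanSpace ℝ (Fin 3)) :=
  Submodule.span ℤ (Set.range stdVec)

lemma E_ext {p q : EuclideanSpace ℝ (Fin 3)} (h : ∀ i, p i = q i) : p = q := PiLp.ext h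

lemma decomp (p : EuclideanSpace ℝ (Fin 3)) :
    p 0 • stdVec 0 + p 1 • stdVec 1 + p 2 • stdVec 2 = p := by
  refine E_ext fun i => ?_
  fin_cases i <;> simp [stdVec, EuclideanSpace.single_apply]

lemma zsum_coord (j : Fin 3) (n : Fin 3 → ℤ) : (∑ i, n i • stdVec i) j = (n j : ℝ) := by
  fin_cases j <;>
    simp [Fin.sum_univ_three, stdVec, EuclideanSpace.single_apply]

lemma mem_pyramid {x y z : ℝ} (hx : 0 ≤ x) (hy : 0 ≤ y) (hz : 0 ≤ z)
    (hxz : x + z ≤ 1) (hyz : y + z ≤ 1) :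
    x • stdVec 0 + y • stdVec 1 + z • stdVec 2 ∈ stdPyramid := by
  set l3 : ℝ := max 0 (x + y + z - 1) with hl3
  have hl3n : 0 ≤ l3 := le_max_left _ _
  have hl3x : l3 ≤ x := max_le hx (by linarith)
  have hl3y : l3 ≤ y := max_le hy (by linarith)
  have hl0 : 0 ≤ 1 - x - y - z + l3 := by
    have := le_max_right 0 (x + y + z - 1); linarith
  set w : Fin 5 → ℝ := ![1 - x - y - z + l3, x - l3, y - l3, l3, z] with hw
  set t : Fin 5 → EuclideanSpace ℝ (Fin 3) :=
    ![0, stdVec 0, stdVec 1, stdVec 0 + stdVec 1, stdVec 2] with ht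
  have hsum : ∑ i, w i = 1 := by
    simp [hw, Fin.sum_univ_five]; ring
  have hmem : Finset.univ.centerMass w t ∈ stdPyramid := by
    apply Finset.centerMass_mem_convexHull
    · intro i _; fin_cases i <;> simp [hw] <;> linarith
    · rw [hsum]; norm_num
    · intro i _; fin_cases i <;> simp [ht, Set.mem_insert_iff]
  rw [Finset.centerMass_eq_of_sum_1 _ _ hsum, Fin.sum_univ_five] at hmem
  convert hmem using 1
  simp only [hw, ht, Matrix.cons_val_zero, Matrix.cons_val_one, Matrix.head_cons,
    Matrix.cons_val_two, Matrix.tail_cons, Matrix.cons_val_three, Matrix.cons_val_four]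
  module

lemma contProj (i : Fin 3) : Continuous (fun p : EuclideanSpace ℝ (Fin 3) => p i) :=
  (EuclideanSpace.proj i : EuclideanSpace ℝ (Fin 3) →L[ℝ] ℝ).continuous

lemma mem_interior_pyr {p : EuclideanSpace ℝ (Fin 3)} (h0 : 0 < p 0) (h1 : 0 < p 1)
    (h2 : 0 < p 2) (h02 : p 0 + p 2 < 1) (h12 : p 1 + p 2 < 1) :
    p ∈ interior stdPyramid := by
  set O : Set (EuclideanSpace ℝ (Fin 3)) :=
    {q | 0 < q 0 ∧ 0 < q 1 ∧ 0 < q 2 ∧ q 0 + q 2 < 1 ∧ q 1 + q 2 < 1} with hO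
  have hopen : IsOpen O := by
    simp only [hO, Set.setOf_and]
    exact (isOpen_lt continuous_const (contProj 0)).inter
      ((isOpen_lt continuous_const (contProj 1)).inter
      ((isOpen_lt continuous_const (contProj 2)).inter
      ((isOpen_lt ((contProj 0).add (contProj 2)) continuous_const).inter
      (isOpen_lt ((contProj 1).add (contProj 2)) continuous_const))))
  have hsub : O ⊆ stdPyramid := by
    rintro q ⟨hq0, hq1, hq2, hq02, hq12⟩
    rw [← decomp q]
    exact mem_pyramid hq0.le hq1.le hq2.le hq02.le hq12.le
  exact interior_maximal hsub hopen ⟨h0, h1, h2, h02, h12⟩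

/-- If `Λ'` is a full-rank lattice in `ℝ³` containing `ℤ³` such that the translates of the
quadrangular pyramid `D` by the vectors of `Λ'` have pairwise disjoint interiors,
then `Λ' = ℤ³`. -/
theorem stmt_14 (Λ' : Submodule ℤ (EuclideanSpace ℝ (Fin 3)))
    [DiscreteTopology Λ'] [IsZLattice ℝ Λ']
    (hle : intLattice ≤ Λ')
    (h : ∀ s ∈ Λ', ∀ t ∈ Λ', s ≠ t →
      Disjoint (interior (s +ᵥ stdPyramid)) (interior (t +ᵥ stdPyramid))) :
    Λ' = intLattice := by
  refine le_antisymm ?_ hle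
  intro v hv
  have hsv : ∀ i, stdVec i ∈ intLattice := fun i => Submodule.subset_span ⟨i, rfl⟩
  have hmemL : ∀ m : Fin 3 → ℤ, (∑ i, m i • stdVec i) ∈ intLattice := fun m =>
    Submodule.sum_mem _ fun i _ => Submodule.smul_mem _ _ (hsv i)
  set n : Fin 3 → ℤ := fun i => ⌊v i⌋ with hn
  set w : EuclideanSpace ℝ (Fin 3) := v - ∑ i, n i • stdVec i with hwdef
  have hwΛ : w ∈ Λ' := Submodule.sub_mem _ hv (hle (hmemL n))
  have hwc : ∀ j, w j = v j - (n j : ℝ) := by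
    intro j
    show v j - (∑ i, n i • stdVec i) j = _
    rw [zsum_coord]
  have hw0le : ∀ j, 0 ≤ w j := fun j => by
    rw [hwc j]; exact sub_nonneg.mpr (Int.floor_le _)
  have hwlt : ∀ j, w j < 1 := fun j => by
    rw [hwc j]; have := Int.lt_floor_add_one (v j); linarith
  suffices hw0 : w = 0 by
    have : v = ∑ i, n i • stdVec i := by
      have := sub_eq_zero.mp (hwdef ▸ hw0)
      exact this
    rw [this]; exact hmemL n
  by_contra hw0
  -- reduce further so that translate intersects the pyramid's interior
  set A : ℤ := if 1 ≤ w 0 + w 2 then 1 else 0 with hA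
  set B : ℤ := if 1 ≤ w 1 + w 2 then 1 else 0 with hB
  set u : EuclideanSpace ℝ (Fin 3) := w - A • stdVec 0 - B • stdVec 1 with hudef
  have huΛ : u ∈ Λ' :=
    Submodule.sub_mem _
      (Submodule.sub_mem _ hwΛ (Submodule.smul_mem _ _ (hle (hsv 0))))
      (Submodule.smul_mem _ _ (hle (hsv 1)))
  have hsv01 : ∀ (c : ℤ) (i j : Fin 3), (c • stdVec i) j = if i = j then (c : ℝ) else 0 := by
    intro c i j
    show c • (stdVec i j) = _
    rw [stdVec, EuclideanSpace.single_apply]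
    split <;> split <;> subst_vars <;> simp_all
  have huc : ∀ j, u j = w j - (A • stdVec 0) j - (B • stdVec 1) j := fun j => rfl
  have hu0 : u 0 = w 0 - (A : ℝ) := by
    rw [huc, hsv01, hsv01, if_pos rfl, if_neg (by decide : ¬((1:Fin 3) = 0))]; ring
  have hu1 : u 1 = w 1 - (B : ℝ) := by
    rw [huc, hsv01, hsv01, if_neg (by decide : ¬((0:Fin 3) = 1)), if_pos rfl]; ring
  have hu2 : u 2 = w 2 := by
    rw [huc, hsv01, hsv01, if_neg (by decide : ¬((0:Fin 3) = 2)),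
      if_neg (by decide : ¬((1:Fin 3) = 2))]; ring
  -- key inequalities
  have hc0 : 0 ≤ u 2 := hu2 ▸ hw0le 2
  have hc1 : u 2 < 1 := hu2 ▸ hwlt 2
  have hkey0 : max 0 (u 0) + u 2 < 1 ∧ -(u 0) ≤ u 2 := by
    rw [hu0, hu2, hA]
    by_cases hcase : 1 ≤ w 0 + w 2
    · rw [if_pos hcase]
      have h1 : w 0 - ((1 : ℤ) : ℝ) ≤ 0 := by push_cast; linarith [hwlt 0]
      rw [max_eq_left h1]
      constructor
      · simpa using hwlt 2
      · push_cast; linarith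
    · rw [if_neg hcase]
      have h1 : (0 : ℝ) ≤ w 0 - ((0 : ℤ) : ℝ) := by push_cast; linarith [hw0le 0]
      rw [max_eq_right h1]
      push_cast
      constructor
      · linarith [not_le.mp hcase]
      · linarith [hw0le 0, hw0le 2]
  have hkey1 : max 0 (u 1) + u 2 < 1 ∧ -(u 1) ≤ u 2 := by
    rw [hu1, hu2, hB]
    by_cases hcase : 1 ≤ w 1 + w 2
    · rw [if_pos hcase]
      have h1 : w 1 - ((1 : ℤ) : ℝ) ≤ 0 := by push_cast; linarith [hwlt 1]
      rw [max_eq_left h1]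
      constructor
      · simpa using hwlt 2
      · push_cast; linarith
    · rw [if_neg hcase]
      have h1 : (0 : ℝ) ≤ w 1 - ((0 : ℤ) : ℝ) := by push_cast; linarith [hw0le 1]
      rw [max_eq_right h1]
      push_cast
      constructor
      · linarith [not_le.mp hcase]
      · linarith [hw0le 1, hw0le 2]
  -- u ≠ 0
  have hune : u ≠ 0 := by
    intro hu
    apply hw0
    have hz : ∀ j, u j = 0 := fun j => by rw [hu]; rfl
    have hc : w 2 = 0 := by rw [← hu2]; exact hz 2
    have hlt0 : w 0 + w 2 < 1 := by rw [hc]; simpa using hwlt 0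
    have hlt1 : w 1 + w 2 < 1 := by rw [hc]; simpa using hwlt 1
    have hA0 : A = 0 := by rw [hA, if_neg (not_le.mpr hlt0)]
    have hB0 : B = 0 := by rw [hB, if_neg (not_le.mpr hlt1)]
    have h0' : w 0 = 0 := by
      have h' := hu0; rw [hz 0, hA0] at h'; push_cast at h'; linarith
    have h1' : w 1 = 0 := by
      have h' := hu1; rw [hz 1, hB0] at h'; push_cast at h'; linarith
    refine E_ext fun i => ?_
    fin_cases i <;> simp [h0', h1', hc]
  -- the common interior point
  set δ : ℝ := (min (1 - (max 0 (u 0) + u 2)) (1 - (max 0 (u 1) + u 2))) / 4 with hδdef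
  have hδ : 0 < δ := by
    rw [hδdef]
    have := hkey0.1; have := hkey1.1
    have : 0 < min (1 - (max 0 (u 0) + u 2)) (1 - (max 0 (u 1) + u 2)) :=
      lt_min (by linarith) (by linarith)
    linarith
  have hδ0 : max 0 (u 0) + u 2 + 2 * δ < 1 := by
    have := min_le_left (1 - (max 0 (u 0) + u 2)) (1 - (max 0 (u 1) + u 2))
    rw [hδdef]; linarith [hδ, hδdef ▸ hδ]
  have hδ1 : max 0 (u 1) + u 2 + 2 * δ < 1 := by
    have := min_le_right (1 - (max 0 (u 0) + u 2)) (1 - (max 0 (u 1) + u 2))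
    rw [hδdef]; linarith [hδ]
  set p : EuclideanSpace ℝ (Fin 3) :=
    (max 0 (u 0) + δ) • stdVec 0 + (max 0 (u 1) + δ) • stdVec 1 + (u 2 + δ) • stdVec 2 with hp
  have hpc : ∀ j, p j = (max 0 (u 0) + δ) * stdVec 0 j + (max 0 (u 1) + δ) * stdVec 1 j
      + (u 2 + δ) * stdVec 2 j := fun j => rfl
  have hp0 : p 0 = max 0 (u 0) + δ := by rw [hpc]; simp [stdVec, EuclideanSpace.single_apply]
  have hp1 : p 1 = max 0 (u 1) + δ := by rw [hpc]; simp [stdVec, EuclideanSpace.single_apply]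
  have hp2 : p 2 = u 2 + δ := by rw [hpc]; simp [stdVec, EuclideanSpace.single_apply]
  have hmax0 : (0:ℝ) ≤ max 0 (u 0) := le_max_left _ _
  have hmax1 : (0:ℝ) ≤ max 0 (u 1) := le_max_left _ _
  have hple : p ∈ interior stdPyramid :=
    mem_interior_pyr (by rw [hp0]; linarith) (by rw [hp1]; linarith)
      (by rw [hp2]; linarith) (by rw [hp0, hp2]; linarith) (by rw [hp1, hp2]; linarith)
  have epu : ∀ j, (p - u) j = p j - u j := fun j => rfl
  have hm0 : max 0 (u 0) - u 0 ≤ u 2 := by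
    rcases le_total (u 0) 0 with h' | h'
    · rw [max_eq_left h']; linarith [hkey0.2]
    · rw [max_eq_right h']; linarith
  have hm1 : max 0 (u 1) - u 1 ≤ u 2 := by
    rcases le_total (u 1) 0 with h' | h'
    · rw [max_eq_left h']; linarith [hkey1.2]
    · rw [max_eq_right h']; linarith
  have hpu : p - u ∈ interior stdPyramid := by
    refine mem_interior_pyr ?_ ?_ ?_ ?_ ?_ <;>
      simp only [epu, hp0, hp1, hp2]
    · linarith [le_max_right (0:ℝ) (u 0)]
    · linarith [le_max_right (0:ℝ) (u 1)]
    · linarith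
    · linarith
    · linarith
  have hmem2 : p ∈ interior (u +ᵥ stdPyramid) := by
    rw [interior_vadd]
    have hmm := Set.vadd_mem_vadd_set (a := u) hpu
    have heq : u +ᵥ (p - u) = p := by rw [vadd_eq_add]; abel
    rwa [heq] at hmm
  have hd := h 0 (Submodule.zero_mem _) u huΛ (fun e => hune e.symm)
  rw [zero_vadd] at hd
  exact Set.disjoint_left.mp hd hple hmem2
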